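/- Correctness of Boolean expression compilation: let B be a Boolean expression, H a finite set of ancilla indices (all holding value false in state s), and i a target index, with vars(B), H, and {i} pairwise disjoint. Then the reversible circuit C = compile(B, i) produced by the recursive compiler satisfies (eval C s)(i) = s(i) XOR (eval B s). -/

import Mathlib

inductive BExp where
  | bfalse : BExp
  | btrue : BExp
  | var (i : ℕ) : BExp
  | bxor (a b : BExp) : BExp
  | band (a b : BExp) : BExp

def BExp.eval : BExp → (ℕ → Bool) → Bool
  | .bfalse, _ => false
  | .btrue, _ => true
  | .var i, s => s i
  | .bxor a b, s => xor (a.eval s) (b.eval s)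
  | .band a b, s => (a.eval s) && (b.eval s)

def BExp.vars : BExp → Finset ℕ
  | .bfalse => ∅
  | .btrue => ∅
  | .var i => {i}
  | .bxor a b => a.vars ∪ b.vars
  | .band a b => a.vars ∪ b.vars

inductive Gate where
  | NOT (i : ℕ) : Gate
  | CNOT (i j : ℕ) : Gate
  | TOF (i j k : ℕ) : Gate

def applyGate : Gate → (ℕ → Bool) → (ℕ → Bool)
  | .NOT i, s => Function.update s i (! s i)
  | .CNOT i j, s => Function.update s j (xor (s i) (s j))
  | .TOF i j k, s => Function.update s k (xor (s i && s j) (s k))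

def evalCirc : List Gate → (ℕ → Bool) → (ℕ → Bool)
  | [], s => s
  | g :: C, s => evalCirc C (applyGate g s)

def Gate.target : Gate → ℕ
  | .NOT i => i
  | .CNOT _ j => j
  | .TOF _ _ k => k

def Gate.controls : Gate → Finset ℕ
  | .NOT _ => ∅
  | .CNOT i _ => {i}
  | .TOF i j _ => {i, j}

def Gate.wf : Gate → Prop
  | .NOT _ => True
  | .CNOT i j => i ≠ j
  | .TOF i j k => i ≠ j ∧ i ≠ k ∧ j ≠ k

def circWf (C : List Gate) : Prop := ∀ g ∈ C, g.wf

def mods (C : List Gate) : Finset ℕ := (C.map Gate.target).toFinset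

def controls (C : List Gate) : Finset ℕ := C.foldr (fun g A => g.controls ∪ A) ∅

def uncompute (C : List Gate) (A : Finset ℕ) : List Gate :=
  C.filter (fun g => g.target ∉ A)

/-- The ancilla heap is modeled as an infinite supply of available (zero-valued)
ancilla indices: `H n` is the `n`-th ancilla on the heap.  Popping the heap
returns `H 0` and the remaining heap `fun n => H (n+1)`. -/
def compileBExp : BExp → ℕ → (ℕ → ℕ) → List Gate × (ℕ → ℕ)
  | .bfalse, _, H => ([], H)
  | .btrue, i, H => ([.NOT i], H)
  | .var j, i, H => ([.CNOT j i], H)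
  | .bxor a b, i, H =>
    let r1 := compileBExp a i H
    let r2 := compileBExp b i r1.2
    (r1.1 ++ r2.1, r2.2)
  | .band a b, i, H =>
    let a1 := H 0
    let r1 := compileBExp a a1 (fun n => H (n+1))
    let a2 := r1.2 0
    let r2 := compileBExp b a2 (fun n => r1.2 (n+1))
    (r1.1 ++ r2.1 ++ [.TOF a1 a2 i], r2.2)

lemma evalCirc_append (C1 C2 : List Gate) (s : ℕ → Bool) :
    evalCirc (C1 ++ C2) s = evalCirc C2 (evalCirc C1 s) := by
  induction C1 generalizing s with
  | nil => rfl
  | cons g C ih => simp [evalCirc, ih]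

lemma evalCirc_notin (C : List Gate) (s : ℕ → Bool) (j : ℕ) (h : j ∉ mods C) :
    evalCirc C s j = s j := by
  induction C generalizing s with
  | nil => rfl
  | cons g C ih =>
    simp [mods] at h
    have h1 : g.target ≠ j := fun hh => h.1 hh.symm
    have := ih (applyGate g s) (by simp [mods]; exact h.2)
    rw [evalCirc, this]
    cases g <;> simp [applyGate, Gate.target] at h1 ⊢ <;>
      rw [Function.update_of_ne (Ne.symm h1)]

lemma eval_congr (B : BExp) (s t : ℕ → Bool) (h : ∀ j ∈ B.vars, s j = t j) :
    B.eval s = B.eval t := by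
  induction B with
  | bfalse => rfl
  | btrue => rfl
  | var j => exact h j (by simp [BExp.vars])
  | bxor a b iha ihb =>
    simp only [BExp.eval]
    rw [iha (fun j hj => h j (by simp [BExp.vars]; exact Or.inl hj)),
        ihb (fun j hj => h j (by simp [BExp.vars]; exact Or.inr hj))]
  | band a b iha ihb =>
    simp only [BExp.eval]
    rw [iha (fun j hj => h j (by simp [BExp.vars]; exact Or.inl hj)),
        ihb (fun j hj => h j (by simp [BExp.vars]; exact Or.inr hj))]

lemma compile_spec (B : BExp) : ∀ i H, ∃ k,
    (compileBExp B i H).2 = (fun n => H (n + k)) ∧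
    ∀ j ∈ mods (compileBExp B i H).1, j = i ∨ ∃ m < k, j = H m := by
  induction B with
  | bfalse =>
    intro i H
    exact ⟨0, rfl, by simp [compileBExp, mods]⟩
  | btrue =>
    intro i H
    refine ⟨0, rfl, ?_⟩
    intro j hj
    simp [compileBExp, mods, Gate.target] at hj
    exact Or.inl hj
  | var v =>
    intro i H
    refine ⟨0, rfl, ?_⟩
    intro j hj
    simp [compileBExp, mods, Gate.target] at hj
    exact Or.inl hj
  | bxor a b iha ihb =>
    intro i H
    obtain ⟨k1, h1, hm1⟩ := iha i H
    obtain ⟨k2, h2, hm2⟩ := ihb i (compileBExp a i H).2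
    refine ⟨k1 + k2, ?_, ?_⟩
    · show (compileBExp b i (compileBExp a i H).2).2 = _
      rw [h2, h1]; funext n; simp; ring_nf
    · intro j hj
      simp only [compileBExp, mods, List.map_append, List.toFinset_append,
        Finset.mem_union] at hj
      rcases hj with hj | hj
      · rcases hm1 j hj with h | ⟨m, hm, rfl⟩
        · exact Or.inl h
        · exact Or.inr ⟨m, by omega, rfl⟩
      · rcases hm2 j hj with h | ⟨m, hm, rfl⟩
        · exact Or.inl h
        · rw [h1]; exact Or.inr ⟨m + k1, by omega, rfl⟩
  | band a b iha ihb =>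
    intro i H
    obtain ⟨k1, h1, hm1⟩ := iha (H 0) (fun n => H (n+1))
    obtain ⟨k2, h2, hm2⟩ := ihb ((compileBExp a (H 0) (fun n => H (n+1))).2 0)
      (fun n => (compileBExp a (H 0) (fun n => H (n+1))).2 (n+1))
    refine ⟨k1 + k2 + 2, ?_, ?_⟩
    · show (compileBExp b _ _).2 = _
      rw [h2]; funext n; rw [h1]; simp; ring_nf
    · intro j hj
      simp only [compileBExp, mods, List.map_append, List.toFinset_append,
        Finset.mem_union, List.map_cons, List.map_nil, List.toFinset_cons,
        List.toFinset_nil, Gate.target, LawfulSingleton.insert_empty_eq, Finset.mem_singleton] at hj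
      rcases hj with (hj | hj) | hj
      · rcases hm1 j hj with h | ⟨m, hm, rfl⟩
        · exact Or.inr ⟨0, by omega, h⟩
        · exact Or.inr ⟨m + 1, by omega, rfl⟩
      · rcases hm2 j hj with h | ⟨m, hm, hj'⟩
        · refine Or.inr ⟨k1 + 1, by omega, ?_⟩
          rw [h, h1]; show H (0 + k1 + 1) = H (k1 + 1); congr 1; omega
        · refine Or.inr ⟨m + k1 + 2, by omega, ?_⟩
          rw [hj', h1]; show H (m + 1 + k1 + 1) = H (m + k1 + 2); congr 1; omega
      · exact Or.inl hj

theorem compile_bexp_correct (B : BExp) (i : ℕ) (H : ℕ → ℕ) (s : ℕ → Bool)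
    (hinj : Function.Injective H)
    (hHB : ∀ n, H n ∉ B.vars) (hHi : ∀ n, H n ≠ i) (hiB : i ∉ B.vars)
    (hzero : ∀ n, s (H n) = false) :
    evalCirc (compileBExp B i H).1 s i = xor (s i) (B.eval s) := by
  induction B generalizing i H s with
  | bfalse => simp [compileBExp, evalCirc, BExp.eval]
  | btrue => simp [compileBExp, evalCirc, applyGate, BExp.eval]
  | var j => simp [compileBExp, evalCirc, applyGate, BExp.eval, Bool.xor_comm]
  | bxor a b iha ihb =>
    have hHa : ∀ n, H n ∉ a.vars := fun n hn => hHB n (by simp [BExp.vars]; exact Or.inl hn)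
    have hHb : ∀ n, H n ∉ b.vars := fun n hn => hHB n (by simp [BExp.vars]; exact Or.inr hn)
    have hia : i ∉ a.vars := fun hn => hiB (by simp [BExp.vars]; exact Or.inl hn)
    have hib : i ∉ b.vars := fun hn => hiB (by simp [BExp.vars]; exact Or.inr hn)
    obtain ⟨k1, h1, hm1⟩ := compile_spec a i H
    set C1 := (compileBExp a i H).1 with hC1
    set H1 := (compileBExp a i H).2 with hH1
    have h1' : ∀ n, H1 n = H (n + k1) := fun n => by rw [h1]
    set s1 := evalCirc C1 s with hs1
    have hs1i : s1 i = xor (s i) (a.eval s) := iha i H s hinj hHa hHi hia hzero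
    have hoff : ∀ j, j ≠ i → (∀ m, m < k1 → j ≠ H m) → s1 j = s j := by
      intro j hji hjH
      apply evalCirc_notin
      intro hj
      rcases hm1 j hj with h | ⟨m, hm, h⟩
      · exact hji h
      · exact hjH m hm h
    have hinj1 : Function.Injective H1 := by
      intro x y hxy; rw [h1'] at hxy; rw [h1'] at hxy
      have := hinj hxy; omega
    have hH1b : ∀ n, H1 n ∉ b.vars := fun n => by rw [h1']; exact hHb _
    have hH1i : ∀ n, H1 n ≠ i := fun n => by rw [h1']; exact hHi _
    have hz1 : ∀ n, s1 (H1 n) = false := by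
      intro n
      rw [h1', hoff (H (n + k1)) (hHi _) (fun m hm h => by have := hinj h; omega)]
      exact hzero _
    have hevb : b.eval s1 = b.eval s :=
      eval_congr b s1 s (fun j hj =>
        hoff j (fun h => hib (h ▸ hj)) (fun m _ h => hHb m (h ▸ hj)))
    show evalCirc (C1 ++ (compileBExp b i H1).1) s i = _
    rw [evalCirc_append, ← hs1, ihb i H1 s1 hinj1 hH1b hH1i hib hz1, hevb, hs1i, BExp.eval]
    cases (s i) <;> cases a.eval s <;> cases b.eval s <;> rfl
  | band a b iha ihb =>
    have hHa : ∀ n, H n ∉ a.vars := fun n hn => hHB n (by simp [BExp.vars]; exact Or.inl hn)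
    have hHb : ∀ n, H n ∉ b.vars := fun n hn => hHB n (by simp [BExp.vars]; exact Or.inr hn)
    have hia : i ∉ a.vars := fun hn => hiB (by simp [BExp.vars]; exact Or.inl hn)
    have hib : i ∉ b.vars := fun hn => hiB (by simp [BExp.vars]; exact Or.inr hn)
    -- compile a into ancilla H 0 with heap shifted by 1
    obtain ⟨k1, h1, hm1⟩ := compile_spec a (H 0) (fun n => H (n+1))
    set C1 := (compileBExp a (H 0) (fun n => H (n+1))).1 with hC1
    set H1 := (compileBExp a (H 0) (fun n => H (n+1))).2 with hH1
    have h1' : ∀ n, H1 n = H (n + k1 + 1) := fun n => by rw [h1]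
    set s1 := evalCirc C1 s with hs1
    have hinj' : Function.Injective (fun n => H (n+1)) := by
      intro x y hxy; have := hinj hxy; omega
    have hs1a1 : s1 (H 0) = a.eval s := by
      rw [hs1, hC1, iha (H 0) (fun n => H (n+1)) s hinj'
        (fun n => hHa _) (fun n h => by have := hinj h; omega) (hHa 0) (fun n => hzero _),
        hzero]
      simp
    have hoff1 : ∀ j, (∀ m, m ≤ k1 → j ≠ H m) → s1 j = s j := by
      intro j hjH
      apply evalCirc_notin
      intro hj
      rcases hm1 j hj with h | ⟨m, hm, h⟩
      · exact hjH 0 (by omega) h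
      · exact hjH (m+1) (by omega) h
    -- compile b into ancilla H1 0 with heap H1 shifted by 1
    obtain ⟨k2, h2, hm2⟩ := compile_spec b (H1 0) (fun n => H1 (n+1))
    set C2 := (compileBExp b (H1 0) (fun n => H1 (n+1))).1 with hC2
    set s2 := evalCirc C2 s1 with hs2
    have hinj1' : Function.Injective (fun n => H1 (n+1)) := by
      intro x y hxy
      simp only [h1'] at hxy
      have := hinj hxy; omega
    have hs1a2 : s1 (H1 0) = false := by
      rw [h1', hoff1 _ (fun m hm h => by have := hinj h; omega)]
      exact hzero _
    have hevb : b.eval s1 = b.eval s :=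
      eval_congr b s1 s (fun j hj => hoff1 j (fun m _ h => hHb m (h ▸ hj)))
    have hs2a2 : s2 (H1 0) = b.eval s := by
      rw [hs2, hC2, ihb (H1 0) (fun n => H1 (n+1)) s1 hinj1'
        (fun n => by show H1 (n+1) ∉ b.vars; rw [h1']; exact hHb _)
        (fun n h => by
          have h' : H1 (n+1) = H1 0 := h
          rw [h1', h1'] at h'; have := hinj h'; omega)
        (by rw [h1']; exact hHb _)
        (fun n => by
          show s1 (H1 (n+1)) = false
          rw [h1', hoff1 _ (fun m hm h => by have := hinj h; omega)]
          exact hzero _),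
        hs1a2, hevb]
      simp
    have hoff2 : ∀ j, (∀ m, m ≤ k2 → j ≠ H1 m) → s2 j = s1 j := by
      intro j hjH
      apply evalCirc_notin
      intro hj
      rcases hm2 j hj with h | ⟨m, hm, h⟩
      · exact hjH 0 (by omega) h
      · exact hjH (m+1) (by omega) h
    have hs2a1 : s2 (H 0) = a.eval s := by
      rw [hoff2 _ (fun m _ h => by rw [h1'] at h; have := hinj h; omega), hs1a1]
    have hs2i : s2 i = s i := by
      rw [hoff2 _ (fun m _ h => by rw [h1'] at h; exact hHi _ h.symm),
          hoff1 _ (fun m _ h => hHi _ h.symm)]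
    show evalCirc ((C1 ++ C2 ++ [Gate.TOF (H 0) (H1 0) i])) s i = _
    rw [evalCirc_append, evalCirc_append, ← hs1, ← hs2]
    simp only [evalCirc, applyGate, Function.update_self, hs2a1, hs2a2, hs2i, BExp.eval]
    cases (s i) <;> cases a.eval s <;> cases b.eval s <;> rfl
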